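/- For the weighted affine estimator with λ̂_i = λ_i, if (Σ_{i=1}^n ω_i)² ≥ (1/(2ε²)) log(2/α) Σ_{i=1}^n (ω_i/λ_i)², then P(|p̂_n - p| > ε) ≤ α. -/

import Mathlib

open MeasureTheory ProbabilityTheory Finset Filter

/-- Sample mean of the first `n` ratings (ratings are indexed from 1). -/
noncomputable def pbar {Ω : Type*} (r : ℕ → Ω → ℝ) (n : ℕ) (ω : Ω) : ℝ :=
  (∑ i ∈ Finset.Icc 1 n, r i ω) / n

/-- σ-algebra generated by the first `n` ratings. -/
def ratingsAlg {Ω : Type*} (r : ℕ → Ω → ℝ) (n : ℕ) : MeasurableSpace Ω :=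
  ⨆ i ∈ Finset.Icc 1 n, MeasurableSpace.comap (r i) (inferInstance : MeasurableSpace ℝ)

/-- The bandwagon rating process of Xie et al., as used in the paper. -/
structure Bandwagon {Ω : Type*} [MeasurableSpace Ω] (μ : Measure Ω)
    (p : ℝ) (lam : ℕ → ℝ) (r : ℕ → Ω → ℝ) : Prop where
  prob : IsProbabilityMeasure μ
  hp : 0 < p ∧ p < 1
  hlam1 : lam 1 = 1
  hlam_nonneg : ∀ n, 1 ≤ n → 0 ≤ lam n
  hlam_mono : ∀ n, 2 ≤ n → lam n ≤ lam (n - 1)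
  hmeas : ∀ n, Measurable (r n)
  hbin : ∀ n, 1 ≤ n → ∀ ω, r n ω = 0 ∨ r n ω = 1
  hfirst : ∫ ω, r 1 ω ∂μ = p
  hcond : ∀ n, 2 ≤ n →
    μ[r n | ratingsAlg r (n - 1)] =ᵐ[μ]
      fun ω => lam n * p + (1 - lam n) * pbar r (n - 1) ω

/-- Affine-corrected rating `r̂ᵢ`. -/
noncomputable def rhat {Ω : Type*} (r : ℕ → Ω → ℝ) (lam : ℕ → ℝ) (i : ℕ) (ω : Ω) : ℝ :=
  (r i ω - (1 - lam i) * pbar r (i - 1) ω) / lam i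

section Aux

open Real

/-- Hoeffding's lemma, pointwise analytic core. -/
lemma BW.hoeffding_pointwise {q : ℝ} (hq0 : 0 ≤ q) (hq1 : q ≤ 1) (c : ℝ) :
    (1 - q + q * exp c) * exp (-(c * q)) ≤ exp (c ^ 2 / 8) := by
  have hD : ∀ x : ℝ, 0 < 1 - q + q * exp x := by
    intro x
    rcases lt_or_eq_of_le hq1 with h | h
    · have : 0 < 1 - q := by linarith
      nlinarith [exp_pos x, mul_nonneg hq0 (exp_pos x).le]
    · subst h; simpa using exp_pos x
  set f : ℝ → ℝ := fun x => q * x + x ^ 2 / 8 - Real.log (1 - q + q * exp x) with hf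
  set g : ℝ → ℝ := fun x => q + x / 4 - q * exp x / (1 - q + q * exp x) with hg
  have hDd : ∀ x : ℝ, HasDerivAt (fun y => 1 - q + q * exp y) (q * exp x) x := by
    intro x
    simpa using ((Real.hasDerivAt_exp x).const_mul q).const_add (1 - q)
  have hfd : ∀ x : ℝ, HasDerivAt f (g x) x := by
    intro x
    have hlog : HasDerivAt (fun y => Real.log (1 - q + q * exp y))
        (q * exp x / (1 - q + q * exp x)) x := (hDd x).log (hD x).ne'
    have h1 : HasDerivAt (fun y : ℝ => q * y + y ^ 2 / 8) (q + 2 * x / 8) x := by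
      have h2 : HasDerivAt (fun y : ℝ => q * y) q x := by
        simpa using (hasDerivAt_id x).const_mul q
      exact (h2.add ((hasDerivAt_pow 2 x).div_const 8)).congr_deriv (by norm_num)
    have := h1.sub hlog
    exact this.congr_deriv (by simp only [hg]; ring)
  have hgd : ∀ x : ℝ, HasDerivAt g
      (1/4 - (q * exp x * (1 - q)) / (1 - q + q * exp x) ^ 2) x := by
    intro x
    have hnum : HasDerivAt (fun y => q * exp y) (q * exp x) x :=
      (Real.hasDerivAt_exp x).const_mul q
    have hquot : HasDerivAt (fun y => q * exp y / (1 - q + q * exp y))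
        ((q * exp x * (1 - q + q * exp x) - q * exp x * (q * exp x)) /
          (1 - q + q * exp x) ^ 2) x := hnum.div (hDd x) (hD x).ne'
    have h1 : HasDerivAt (fun y : ℝ => q + y / 4) (1/4) x := by
      simpa using ((hasDerivAt_id x).div_const 4).const_add q
    have := h1.sub hquot
    exact this.congr_deriv (by ring)
  have hg0 : g 0 = 0 := by simp [hg]
  have hgderiv_nonneg : ∀ x, 0 ≤ 1/4 - (q * exp x * (1 - q)) / (1 - q + q * exp x) ^ 2 := by
    intro x
    rw [sub_nonneg, div_le_iff₀ (pow_pos (hD x) 2)]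
    nlinarith [sq_nonneg (1 - q - q * exp x)]
  have hgmono : Monotone g := by
    have : ∀ x, 0 ≤ deriv g x := by
      intro x; rw [(hgd x).deriv]; exact hgderiv_nonneg x
    exact monotone_of_deriv_nonneg (fun x => (hgd x).differentiableAt) this
  have hf0 : f 0 = 0 := by simp [hf]
  have hdiff : ∀ x, DifferentiableAt ℝ f x := fun x => (hfd x).differentiableAt
  have hderiv : ∀ x, deriv f x = g x := fun x => (hfd x).deriv
  have hfnonneg : ∀ x, 0 ≤ f x := by
    intro x
    rcases le_total 0 x with hx | hx
    · have hmono : MonotoneOn f (Set.Ici (0:ℝ)) := by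
        refine monotoneOn_of_deriv_nonneg (convex_Ici 0)
          (fun y _ => (hdiff y).continuousAt.continuousWithinAt)
          (fun y _ => (hdiff y).differentiableWithinAt) ?_
        intro y hy
        rw [hderiv]
        rw [interior_Ici] at hy
        calc (0:ℝ) = g 0 := hg0.symm
          _ ≤ g y := hgmono hy.le
      have := hmono (Set.self_mem_Ici) (Set.mem_Ici.2 hx) hx
      linarith [hf0 ▸ this]
    · have hanti : AntitoneOn f (Set.Iic (0:ℝ)) := by
        refine antitoneOn_of_deriv_nonpos (convex_Iic 0)
          (fun y _ => (hdiff y).continuousAt.continuousWithinAt)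
          (fun y _ => (hdiff y).differentiableWithinAt) ?_
        intro y hy
        rw [hderiv]
        rw [interior_Iic] at hy
        calc g y ≤ g 0 := hgmono hy.le
          _ = 0 := hg0
      have := hanti (Set.mem_Iic.2 hx) (Set.self_mem_Iic) hx
      linarith [hf0 ▸ this]
  have := hfnonneg c
  have hlog_le : Real.log (1 - q + q * exp c) ≤ q * c + c ^ 2 / 8 := by
    simp only [hf] at this; linarith
  calc (1 - q + q * exp c) * exp (-(c * q))
      ≤ exp (q * c + c ^ 2 / 8) * exp (-(c * q)) := by
        apply mul_le_mul_of_nonneg_right _ (exp_pos _).le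
        rwa [← Real.log_le_iff_le_exp (hD c)]
    _ = exp (c ^ 2 / 8) := by rw [← Real.exp_add]; ring_nf

variable {Ω : Type*} [MeasurableSpace Ω] {μ : Measure Ω} {r : ℕ → Ω → ℝ}

lemma BW.integrable_of_bdd [IsFiniteMeasure μ] {f : Ω → ℝ} (hf : Measurable f) {C : ℝ}
    (h : ∀ ω, |f ω| ≤ C) : Integrable f μ :=
  (integrable_const C).mono' hf.aestronglyMeasurable
    (ae_of_all _ fun ω => by simpa [Real.norm_eq_abs] using h ω)

lemma BW.ratingsAlg_le (hmeas : ∀ n, Measurable (r n)) (k : ℕ) :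
    ratingsAlg r k ≤ ‹MeasurableSpace Ω› := by
  apply iSup₂_le
  intro i _
  exact (hmeas i).comap_le

lemma BW.ratingsAlg_mono {j k : ℕ} (h : j ≤ k) : ratingsAlg r j ≤ ratingsAlg r k := by
  apply iSup₂_le
  intro i hi
  refine le_iSup₂_of_le i ?_ le_rfl
  simp only [Finset.mem_Icc] at hi ⊢
  exact ⟨hi.1, hi.2.trans h⟩

lemma BW.measurable_r {i k : ℕ} (hi : i ∈ Finset.Icc 1 k) :
    Measurable[ratingsAlg r k] (r i) :=
  Measurable.of_comap_le (le_iSup₂_of_le i hi le_rfl)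

lemma BW.measurable_pbar (k : ℕ) : Measurable[ratingsAlg r k] (pbar r k) := by
  unfold pbar
  apply Measurable.div_const
  exact Finset.measurable_sum _ fun i hi => BW.measurable_r hi

lemma BW.measurable_pbar_of_le {j k : ℕ} (h : j ≤ k) :
    Measurable[ratingsAlg r k] (pbar r j) :=
  (BW.measurable_pbar j).mono (BW.ratingsAlg_mono h) le_rfl

lemma BW.pbar_mem_Icc (hbin : ∀ n, 1 ≤ n → ∀ ω, r n ω = 0 ∨ r n ω = 1) (k : ℕ) (ω : Ω) :
    0 ≤ pbar r k ω ∧ pbar r k ω ≤ 1 := by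
  have h0 : ∀ i ∈ Finset.Icc 1 k, (0:ℝ) ≤ r i ω := by
    intro i hi
    rcases hbin i (Finset.mem_Icc.1 hi).1 ω with h | h <;> rw [h] <;> norm_num
  have h1 : ∀ i ∈ Finset.Icc 1 k, r i ω ≤ 1 := by
    intro i hi
    rcases hbin i (Finset.mem_Icc.1 hi).1 ω with h | h <;> rw [h] <;> norm_num
  rcases Nat.eq_zero_or_pos k with hk | hk
  · subst hk; simp [pbar]
  constructor
  · exact div_nonneg (Finset.sum_nonneg h0) (by positivity)
  · rw [pbar, div_le_one (by exact_mod_cast hk)]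
    calc (∑ i ∈ Finset.Icc 1 k, r i ω) ≤ ∑ i ∈ Finset.Icc 1 k, (1:ℝ) :=
          Finset.sum_le_sum h1
      _ = k := by simp

end Aux

section MGF

open Real

variable {Ω : Type*} [MeasurableSpace Ω] {μ : Measure Ω} {p : ℝ} {lam : ℕ → ℝ} {r : ℕ → Ω → ℝ}

lemma BW.lam_le_one (h1 : lam 1 = 1) (hmono : ∀ n, 2 ≤ n → lam n ≤ lam (n - 1)) :
    ∀ i, 1 ≤ i → lam i ≤ 1 := by
  intro i hi
  induction i with
  | zero => omega
  | succ k ih =>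
    rcases Nat.lt_or_ge k 1 with hk | hk
    · interval_cases k
      simp [h1]
    · have := hmono (k + 1) (by omega)
      simpa using this.trans (ih hk)

lemma BW.mgf_bound (hbw : Bandwagon μ p lam r) (w : ℕ → ℝ) (t : ℝ) (k : ℕ) :
    ∫ ω, Real.exp (∑ i ∈ Finset.Icc 1 k,
        (t * (w i / lam i)) * (r i ω - (lam i * p + (1 - lam i) * pbar r (i - 1) ω))) ∂μ
      ≤ Real.exp (t ^ 2 * (∑ i ∈ Finset.Icc 1 k, (w i / lam i) ^ 2) / 8) := by
  haveI := hbw.prob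
  set q : ℕ → Ω → ℝ := fun i ω => lam i * p + (1 - lam i) * pbar r (i - 1) ω with hqdef
  set c : ℕ → ℝ := fun i => t * (w i / lam i) with hcdef
  set X : ℕ → Ω → ℝ := fun k ω => ∑ i ∈ Finset.Icc 1 k, c i * (r i ω - q i ω) with hXdef
  have hr01 : ∀ i, 1 ≤ i → ∀ ω, 0 ≤ r i ω ∧ r i ω ≤ 1 := by
    intro i hi ω
    rcases hbw.hbin i hi ω with h | h <;> rw [h] <;> norm_num
  have hlam01 : ∀ i, 1 ≤ i → 0 ≤ lam i ∧ lam i ≤ 1 := fun i hi =>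
    ⟨hbw.hlam_nonneg i hi, BW.lam_le_one hbw.hlam1 hbw.hlam_mono i hi⟩
  have hq01 : ∀ i, 1 ≤ i → ∀ ω, 0 ≤ q i ω ∧ q i ω ≤ 1 := by
    intro i hi ω
    obtain ⟨hl0, hl1⟩ := hlam01 i hi
    obtain ⟨hp0, hp1⟩ := BW.pbar_mem_Icc hbw.hbin (i - 1) ω
    have hp := hbw.hp
    constructor
    · simp only [hqdef]; nlinarith
    · simp only [hqdef]; nlinarith
  have hmpbar : ∀ j, Measurable (pbar r j) := fun j =>
    (BW.measurable_pbar j).mono (BW.ratingsAlg_le hbw.hmeas j) le_rfl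
  have hmq : ∀ i, Measurable (q i) := by
    intro i
    simp only [hqdef]
    exact measurable_const.add (((hmpbar (i - 1)).const_mul _))
  have hmX : ∀ k, Measurable (X k) := by
    intro k
    simp only [hXdef]
    exact Finset.measurable_sum _ fun i _ => (((hbw.hmeas i).sub (hmq i)).const_mul _)
  have hXb : ∀ k ω, |X k ω| ≤ ∑ i ∈ Finset.Icc 1 k, |c i| := by
    intro k ω
    refine (Finset.abs_sum_le_sum_abs _ _).trans (Finset.sum_le_sum ?_)
    intro i hi
    have hi1 : 1 ≤ i := (Finset.mem_Icc.1 hi).1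
    rw [abs_mul]
    have h1 : |r i ω - q i ω| ≤ 1 := by
      obtain ⟨a, b⟩ := hr01 i hi1 ω
      obtain ⟨d, e⟩ := hq01 i hi1 ω
      rw [abs_le]
      constructor <;> linarith
    calc |c i| * |r i ω - q i ω| ≤ |c i| * 1 :=
          mul_le_mul_of_nonneg_left h1 (abs_nonneg _)
      _ = |c i| := mul_one _
  have hIexpX : ∀ k, Integrable (fun ω => Real.exp (X k ω)) μ := by
    intro k
    refine BW.integrable_of_bdd ((hmX k).exp) (C := Real.exp (∑ i ∈ Finset.Icc 1 k, |c i|)) ?_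
    intro ω
    rw [abs_of_pos (Real.exp_pos _), Real.exp_le_exp]
    exact (le_abs_self _).trans (hXb k ω)
  have key : ∀ k, ∫ ω, Real.exp (X k ω) ∂μ
      ≤ Real.exp (t ^ 2 * (∑ i ∈ Finset.Icc 1 k, (w i / lam i) ^ 2) / 8) := by
    intro k
    induction k with
    | zero => simp [hXdef]
    | succ k ih =>
      have hins : Finset.Icc 1 (k + 1) = insert (k + 1) (Finset.Icc 1 k) :=
        (Finset.insert_Icc_right_eq_Icc_add_one (by omega)).symm
      have hnotmem : k + 1 ∉ Finset.Icc 1 k := by simp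
      set c' := c (k + 1) with hc'def
      set G : Ω → ℝ := fun ω => Real.exp (X k ω) * Real.exp (-(c' * q (k + 1) ω)) with hGdef
      have hq01' := hq01 (k + 1) (by omega)
      have hmG : Measurable G := ((hmX k).exp).mul ((((hmq (k + 1)).const_mul c').neg).exp)
      have hGbd : ∀ ω, |G ω| ≤ Real.exp (∑ i ∈ Finset.Icc 1 k, |c i|) * Real.exp |c'| := by
        intro ω
        rw [abs_of_pos (by positivity)]
        apply mul_le_mul _ _ (Real.exp_pos _).le (Real.exp_pos _).le
        · rw [Real.exp_le_exp]
          exact (le_abs_self _).trans (hXb k ω)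
        · rw [Real.exp_le_exp]
          obtain ⟨h0, h1⟩ := hq01' ω
          calc -(c' * q (k + 1) ω) ≤ |c' * q (k + 1) ω| := neg_le_abs _
            _ = |c'| * |q (k + 1) ω| := abs_mul _ _
            _ ≤ |c'| * 1 := by
                apply mul_le_mul_of_nonneg_left _ (abs_nonneg _)
                rw [abs_of_nonneg h0]
                exact h1
            _ = |c'| := mul_one _
      have hIG : Integrable G μ := BW.integrable_of_bdd hmG hGbd
      have hIGr : Integrable (fun ω => G ω * r (k + 1) ω) μ := by
        refine BW.integrable_of_bdd (hmG.mul (hbw.hmeas _))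
          (C := Real.exp (∑ i ∈ Finset.Icc 1 k, |c i|) * Real.exp |c'|) ?_
        intro ω
        rw [abs_mul]
        obtain ⟨h0, h1⟩ := hr01 (k + 1) (by omega) ω
        calc |G ω| * |r (k + 1) ω| ≤ |G ω| * 1 := by
              apply mul_le_mul_of_nonneg_left _ (abs_nonneg _)
              rw [abs_of_nonneg h0]
              exact h1
          _ = |G ω| := mul_one _
          _ ≤ _ := hGbd ω
      have hIGq : Integrable (fun ω => G ω * q (k + 1) ω) μ := by
        refine BW.integrable_of_bdd (hmG.mul (hmq _))
          (C := Real.exp (∑ i ∈ Finset.Icc 1 k, |c i|) * Real.exp |c'|) ?_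
        intro ω
        rw [abs_mul]
        obtain ⟨h0, h1⟩ := hq01' ω
        calc |G ω| * |q (k + 1) ω| ≤ |G ω| * 1 := by
              apply mul_le_mul_of_nonneg_left _ (abs_nonneg _)
              rw [abs_of_nonneg h0]
              exact h1
          _ = |G ω| := mul_one _
          _ ≤ _ := hGbd ω
      have hC : ∫ ω, G ω * r (k + 1) ω ∂μ = ∫ ω, G ω * q (k + 1) ω ∂μ := by
        rcases Nat.eq_zero_or_pos k with hk0 | hk1
        · subst hk0
          have hq1 : ∀ ω, q 1 ω = p := by
            intro ω
            simp [hqdef, hbw.hlam1]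
          have hG1 : ∀ ω, G ω = Real.exp (-(c' * p)) := by
            intro ω
            simp [hGdef, hXdef, hq1 ω]
          calc ∫ ω, G ω * r 1 ω ∂μ = ∫ ω, Real.exp (-(c' * p)) * r 1 ω ∂μ := by
                congr 1
                funext ω
                rw [hG1 ω]
            _ = Real.exp (-(c' * p)) * ∫ ω, r 1 ω ∂μ := integral_const_mul _ _
            _ = Real.exp (-(c' * p)) * p := by rw [hbw.hfirst]
            _ = ∫ ω, G ω * q 1 ω ∂μ := by
                rw [show (fun ω => G ω * q 1 ω) = fun _ => Real.exp (-(c' * p)) * p by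
                  funext ω; rw [hG1 ω, hq1 ω]]
                simp
        · have hm : ratingsAlg r k ≤ ‹MeasurableSpace Ω› := BW.ratingsAlg_le hbw.hmeas k
          haveI : SigmaFinite (μ.trim hm) := by
            haveI : IsFiniteMeasure (μ.trim hm) := isFiniteMeasure_trim hm
            infer_instance
          have hIr : Integrable (r (k + 1)) μ := by
            refine BW.integrable_of_bdd (hbw.hmeas _) (C := 1) ?_
            intro ω
            obtain ⟨h0, h1⟩ := hr01 (k + 1) (by omega) ω
            rw [abs_of_nonneg h0]
            exact h1
          have hGsm : StronglyMeasurable[ratingsAlg r k] G := by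
            apply Measurable.stronglyMeasurable
            apply Measurable.mul
            · apply Measurable.exp
              simp only [hXdef]
              apply Finset.measurable_sum
              intro i hi
              have hi' := Finset.mem_Icc.1 hi
              apply Measurable.const_mul
              apply Measurable.sub
              · exact BW.measurable_r hi
              · simp only [hqdef]
                exact measurable_const.add
                  ((BW.measurable_pbar_of_le (by omega)).const_mul _)
            · apply Measurable.exp
              apply Measurable.neg
              apply Measurable.const_mul
              simp only [hqdef, Nat.add_sub_cancel]
              exact measurable_const.add ((BW.measurable_pbar k).const_mul _)
          have hcond := hbw.hcond (k + 1) (by omega)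
          simp only [Nat.add_sub_cancel] at hcond
          have hpull : μ[(fun ω => G ω * r (k + 1) ω)|ratingsAlg r k] =ᵐ[μ]
              fun ω => G ω * (μ[r (k + 1)|ratingsAlg r k]) ω :=
            condExp_mul_of_stronglyMeasurable_left hGsm hIGr hIr
          calc ∫ ω, G ω * r (k + 1) ω ∂μ
              = ∫ ω, (μ[(fun ω => G ω * r (k + 1) ω)|ratingsAlg r k]) ω ∂μ :=
                (integral_condExp hm).symm
            _ = ∫ ω, G ω * (μ[r (k + 1)|ratingsAlg r k]) ω ∂μ := integral_congr_ae hpull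
            _ = ∫ ω, G ω * q (k + 1) ω ∂μ := by
                apply integral_congr_ae
                filter_upwards [hcond] with ω hω
                rw [hω]
                simp [hqdef]
      have hpt : ∀ ω, Real.exp (X (k + 1) ω)
          = G ω + (Real.exp c' - 1) * (G ω * r (k + 1) ω) := by
        intro ω
        have hXs : X (k + 1) ω = c' * r (k + 1) ω + (-(c' * q (k + 1) ω) + X k ω) := by
          simp only [hXdef, hins, Finset.sum_insert hnotmem, ← hc'def]
          ring
        rw [hXs, Real.exp_add, Real.exp_add]
        rcases hbw.hbin (k + 1) (by omega) ω with h | h <;>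
          rw [h] <;> simp [hGdef] <;> ring
      calc ∫ ω, Real.exp (X (k + 1) ω) ∂μ
          = ∫ ω, (G ω + (Real.exp c' - 1) * (G ω * r (k + 1) ω)) ∂μ := by
            congr 1
            funext ω
            exact hpt ω
        _ = ∫ ω, G ω ∂μ + (Real.exp c' - 1) * ∫ ω, G ω * r (k + 1) ω ∂μ := by
            rw [integral_add hIG (hIGr.const_mul _), integral_const_mul]
        _ = ∫ ω, G ω ∂μ + (Real.exp c' - 1) * ∫ ω, G ω * q (k + 1) ω ∂μ := by rw [hC]
        _ = ∫ ω, (G ω + (Real.exp c' - 1) * (G ω * q (k + 1) ω)) ∂μ := by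
            rw [integral_add hIG (hIGq.const_mul _), integral_const_mul]
        _ ≤ ∫ ω, Real.exp (X k ω) * Real.exp (c' ^ 2 / 8) ∂μ := by
            apply integral_mono (hIG.add (hIGq.const_mul _)) ((hIexpX k).mul_const _)
            intro ω
            simp only [Pi.add_apply]
            have h1 : G ω + (Real.exp c' - 1) * (G ω * q (k + 1) ω)
                = Real.exp (X k ω) *
                  ((1 - q (k + 1) ω + q (k + 1) ω * Real.exp c') *
                    Real.exp (-(c' * q (k + 1) ω))) := by
              simp only [hGdef]
              ring
            rw [h1]
            exact mul_le_mul_of_nonneg_left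
              (BW.hoeffding_pointwise (hq01' ω).1 (hq01' ω).2 c') (Real.exp_pos _).le
        _ = (∫ ω, Real.exp (X k ω) ∂μ) * Real.exp (c' ^ 2 / 8) := by
            rw [integral_mul_const]
        _ ≤ Real.exp (t ^ 2 * (∑ i ∈ Finset.Icc 1 k, (w i / lam i) ^ 2) / 8)
              * Real.exp (c' ^ 2 / 8) :=
            mul_le_mul_of_nonneg_right ih (Real.exp_pos _).le
        _ = Real.exp (t ^ 2 * (∑ i ∈ Finset.Icc 1 (k + 1), (w i / lam i) ^ 2) / 8) := by
            rw [← Real.exp_add, hins, Finset.sum_insert hnotmem]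
            congr 1
            simp only [hc'def, hcdef]
            ring
  exact key k

end MGF

section Tail

open Real

variable {Ω : Type*} [MeasurableSpace Ω] {μ : Measure Ω}

lemma BW.chernoff [IsProbabilityMeasure μ] {Y : Ω → ℝ} {V s : ℝ}
    (hmgf : ∀ t : ℝ, ∫ ω, Real.exp (t * Y ω) ∂μ ≤ Real.exp (t ^ 2 * V / 8))
    (hint : ∀ t : ℝ, Integrable (fun ω => Real.exp (t * Y ω)) μ)
    (hV : 0 < V) (hs : 0 < s) :
    (μ {ω | s ≤ Y ω}).toReal ≤ Real.exp (-(2 * s ^ 2 / V)) := by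
  set t := 4 * s / V with htdef
  have ht : 0 < t := by positivity
  have hmark := mul_meas_ge_le_integral_of_nonneg
    (ae_of_all μ fun ω => (Real.exp_pos (t * Y ω)).le) (hint t) (Real.exp (t * s))
  have hset : {x | Real.exp (t * s) ≤ Real.exp (t * Y x)} = {ω | s ≤ Y ω} := by
    ext x
    simp only [Set.mem_setOf_eq, Real.exp_le_exp]
    exact ⟨fun h => le_of_mul_le_mul_left h ht,
      fun h => mul_le_mul_of_nonneg_left h ht.le⟩
  rw [hset] at hmark
  have hle := hmark.trans (hmgf t)
  have h2 : (μ {ω | s ≤ Y ω}).toReal ≤ Real.exp (t ^ 2 * V / 8) / Real.exp (t * s) := by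
    rw [le_div_iff₀ (Real.exp_pos _)]
    calc (μ {ω | s ≤ Y ω}).toReal * Real.exp (t * s)
        = Real.exp (t * s) * (μ {ω | s ≤ Y ω}).toReal := mul_comm _ _
      _ ≤ Real.exp (t ^ 2 * V / 8) := hle
  calc (μ {ω | s ≤ Y ω}).toReal ≤ _ := h2
    _ = Real.exp (t ^ 2 * V / 8 - t * s) := (Real.exp_sub _ _).symm
    _ = Real.exp (-(2 * s ^ 2 / V)) := by
        congr 1
        rw [htdef]
        field_simp
        ring

end Tail

theorem affine_estimator_tail_bound {Ω : Type*} [MeasurableSpace Ω] (μ : MeasureTheory.Measure Ω)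
    (p : ℝ) (lam : ℕ → ℝ) (r : ℕ → Ω → ℝ)
    (hbw : Bandwagon μ p lam r)
    (hpos : ∀ i, 1 ≤ i → 0 < lam i) (w : ℕ → ℝ) (hw : ∀ i, 1 ≤ i → 0 < w i)
    (ε α : ℝ) (hε : 0 < ε) (hα : 0 < α ∧ α < 1) :
    ∀ n, 1 ≤ n →
      (∑ i ∈ Finset.Icc 1 n, w i) ^ 2
          ≥ (1 / (2 * ε ^ 2)) * Real.log (2 / α) * ∑ i ∈ Finset.Icc 1 n, (w i / lam i) ^ 2 →
      μ {ω | ε <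
          |(∑ i ∈ Finset.Icc 1 n, w i * rhat r lam i ω) / (∑ i ∈ Finset.Icc 1 n, w i) - p|}
        ≤ ENNReal.ofReal α := by
  haveI := hbw.prob
  intro n hn hyp
  set S := ∑ i ∈ Finset.Icc 1 n, w i with hSdef
  set V := ∑ i ∈ Finset.Icc 1 n, (w i / lam i) ^ 2 with hVdef
  have hne : (Finset.Icc 1 n).Nonempty := by
    rw [Finset.nonempty_Icc]
    exact hn
  have hS : 0 < S :=
    Finset.sum_pos (fun i hi => hw i (Finset.mem_Icc.1 hi).1) hne
  have hV : 0 < V :=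
    Finset.sum_pos (fun i hi => pow_pos
      (div_pos (hw i (Finset.mem_Icc.1 hi).1) (hpos i (Finset.mem_Icc.1 hi).1)) 2) hne
  set Y : Ω → ℝ := fun ω => ∑ i ∈ Finset.Icc 1 n,
      (w i / lam i) * (r i ω - (lam i * p + (1 - lam i) * pbar r (i - 1) ω)) with hYdef
  -- bounds on r, lam, q, pbar (as in mgf lemma)
  have hr01 : ∀ i, 1 ≤ i → ∀ ω, 0 ≤ r i ω ∧ r i ω ≤ 1 := by
    intro i hi ω
    rcases hbw.hbin i hi ω with h | h <;> rw [h] <;> norm_num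
  have hlam01 : ∀ i, 1 ≤ i → 0 ≤ lam i ∧ lam i ≤ 1 := fun i hi =>
    ⟨hbw.hlam_nonneg i hi, BW.lam_le_one hbw.hlam1 hbw.hlam_mono i hi⟩
  have hq01 : ∀ i, 1 ≤ i → ∀ ω,
      0 ≤ lam i * p + (1 - lam i) * pbar r (i - 1) ω ∧
        lam i * p + (1 - lam i) * pbar r (i - 1) ω ≤ 1 := by
    intro i hi ω
    obtain ⟨hl0, hl1⟩ := hlam01 i hi
    obtain ⟨hp0, hp1⟩ := BW.pbar_mem_Icc hbw.hbin (i - 1) ω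
    have hp := hbw.hp
    constructor
    · nlinarith
    · nlinarith
  have hmpbar : ∀ j, Measurable (pbar r j) := fun j =>
    (BW.measurable_pbar j).mono (BW.ratingsAlg_le hbw.hmeas j) le_rfl
  have hmY : Measurable Y := by
    apply Finset.measurable_sum
    intro i _
    exact (((hbw.hmeas i).sub
      (measurable_const.add ((hmpbar (i - 1)).const_mul _))).const_mul _)
  have hYb : ∀ ω, |Y ω| ≤ ∑ i ∈ Finset.Icc 1 n, |w i / lam i| := by
    intro ω
    refine (Finset.abs_sum_le_sum_abs _ _).trans (Finset.sum_le_sum ?_)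
    intro i hi
    have hi1 : 1 ≤ i := (Finset.mem_Icc.1 hi).1
    rw [abs_mul]
    have h1 : |r i ω - (lam i * p + (1 - lam i) * pbar r (i - 1) ω)| ≤ 1 := by
      obtain ⟨a, b⟩ := hr01 i hi1 ω
      obtain ⟨d, e⟩ := hq01 i hi1 ω
      rw [abs_le]
      constructor <;> linarith
    calc |w i / lam i| * _ ≤ |w i / lam i| * 1 :=
          mul_le_mul_of_nonneg_left h1 (abs_nonneg _)
      _ = |w i / lam i| := mul_one _
  -- mgf bound for Y
  have hmgf : ∀ t : ℝ, ∫ ω, Real.exp (t * Y ω) ∂μ ≤ Real.exp (t ^ 2 * V / 8) := by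
    intro t
    have h := BW.mgf_bound hbw w t n
    have heq : ∀ ω, t * Y ω = ∑ i ∈ Finset.Icc 1 n,
        (t * (w i / lam i)) * (r i ω - (lam i * p + (1 - lam i) * pbar r (i - 1) ω)) := by
      intro ω
      rw [hYdef, Finset.mul_sum]
      apply Finset.sum_congr rfl
      intro i _
      ring
    calc ∫ ω, Real.exp (t * Y ω) ∂μ
        = ∫ ω, Real.exp (∑ i ∈ Finset.Icc 1 n,
            (t * (w i / lam i)) *
              (r i ω - (lam i * p + (1 - lam i) * pbar r (i - 1) ω))) ∂μ := by
          congr 1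
          funext ω
          rw [heq ω]
      _ ≤ _ := h
  have hint : ∀ t : ℝ, Integrable (fun ω => Real.exp (t * Y ω)) μ := by
    intro t
    refine BW.integrable_of_bdd ((hmY.const_mul t).exp)
      (C := Real.exp (|t| * ∑ i ∈ Finset.Icc 1 n, |w i / lam i|)) ?_
    intro ω
    rw [abs_of_pos (Real.exp_pos _), Real.exp_le_exp]
    calc t * Y ω ≤ |t * Y ω| := le_abs_self _
      _ = |t| * |Y ω| := abs_mul _ _
      _ ≤ |t| * ∑ i ∈ Finset.Icc 1 n, |w i / lam i| :=
          mul_le_mul_of_nonneg_left (hYb ω) (abs_nonneg _)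
  -- identity with the estimator
  have hYid : ∀ ω, Y ω = (∑ i ∈ Finset.Icc 1 n, w i * rhat r lam i ω) - p * S := by
    intro ω
    have hterm : ∀ i ∈ Finset.Icc 1 n,
        (w i / lam i) * (r i ω - (lam i * p + (1 - lam i) * pbar r (i - 1) ω))
          = w i * rhat r lam i ω - p * w i := by
      intro i hi
      have hl := (hpos i (Finset.mem_Icc.1 hi).1).ne'
      rw [rhat]
      field_simp
      ring
    calc Y ω = ∑ i ∈ Finset.Icc 1 n, (w i * rhat r lam i ω - p * w i) :=
          Finset.sum_congr rfl hterm
      _ = (∑ i ∈ Finset.Icc 1 n, w i * rhat r lam i ω)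
            - ∑ i ∈ Finset.Icc 1 n, p * w i := Finset.sum_sub_distrib _ _
      _ = _ := by rw [← Finset.mul_sum]
  have hs : 0 < ε * S := by positivity
  have hA := BW.chernoff hmgf hint hV hs
  have hmgfneg : ∀ t : ℝ, ∫ ω, Real.exp (t * (-Y ω)) ∂μ ≤ Real.exp (t ^ 2 * V / 8) := by
    intro t
    have := hmgf (-t)
    simpa [neg_mul, mul_neg, neg_neg, neg_sq] using this
  have hintneg : ∀ t : ℝ, Integrable (fun ω => Real.exp (t * (-Y ω))) μ := by
    intro t
    have := hint (-t)
    simpa [neg_mul, mul_neg] using this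
  have hB := BW.chernoff (Y := fun ω => -Y ω) hmgfneg hintneg hV hs
  have hsub : {ω | ε < |(∑ i ∈ Finset.Icc 1 n, w i * rhat r lam i ω) / S - p|}
      ⊆ {ω | ε * S ≤ Y ω} ∪ {ω | ε * S ≤ -Y ω} := by
    intro ω hω
    simp only [Set.mem_setOf_eq, Set.mem_union] at hω ⊢
    have hid : (∑ i ∈ Finset.Icc 1 n, w i * rhat r lam i ω) / S - p = Y ω / S := by
      rw [hYid ω]
      field_simp
    rw [hid, abs_div, abs_of_pos hS, lt_div_iff₀ hS] at hω
    rcases abs_cases (Y ω) with ⟨h, _⟩ | ⟨h, _⟩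
    · left
      rw [h] at hω
      linarith
    · right
      rw [h] at hω
      linarith
  have hkey : Real.exp (-(2 * (ε * S) ^ 2 / V)) + Real.exp (-(2 * (ε * S) ^ 2 / V)) ≤ α := by
    have h2 : (0:ℝ) < 2 * ε ^ 2 := by positivity
    rw [ge_iff_le, show (1 / (2 * ε ^ 2)) * Real.log (2 / α) * V
        = Real.log (2 / α) * V / (2 * ε ^ 2) from by ring, div_le_iff₀ h2] at hyp
    have hL : Real.log (2 / α) * V ≤ 2 * (ε * S) ^ 2 := by
      calc Real.log (2 / α) * V ≤ S ^ 2 * (2 * ε ^ 2) := hyp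
        _ = 2 * (ε * S) ^ 2 := by ring
    have h1 : Real.log (2 / α) ≤ 2 * (ε * S) ^ 2 / V := by
      rw [le_div_iff₀ hV]
      exact hL
    have hexp : Real.exp (-(2 * (ε * S) ^ 2 / V)) ≤ α / 2 := by
      calc Real.exp (-(2 * (ε * S) ^ 2 / V)) ≤ Real.exp (-Real.log (2 / α)) := by
            rw [Real.exp_le_exp]
            linarith
        _ = α / 2 := by
            rw [Real.exp_neg, Real.exp_log (div_pos two_pos hα.1), inv_div]
    linarith
  have hAen : μ {ω | ε * S ≤ Y ω} ≤ ENNReal.ofReal (Real.exp (-(2 * (ε * S) ^ 2 / V))) :=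
    (ENNReal.le_ofReal_iff_toReal_le (measure_ne_top μ _) (Real.exp_pos _).le).2 hA
  have hBen : μ {ω | ε * S ≤ -Y ω} ≤ ENNReal.ofReal (Real.exp (-(2 * (ε * S) ^ 2 / V))) :=
    (ENNReal.le_ofReal_iff_toReal_le (measure_ne_top μ _) (Real.exp_pos _).le).2 hB
  calc μ {ω | ε < |(∑ i ∈ Finset.Icc 1 n, w i * rhat r lam i ω) / S - p|}
      ≤ μ ({ω | ε * S ≤ Y ω} ∪ {ω | ε * S ≤ -Y ω}) := measure_mono hsub
    _ ≤ μ {ω | ε * S ≤ Y ω} + μ {ω | ε * S ≤ -Y ω} := measure_union_le _ _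
    _ ≤ ENNReal.ofReal (Real.exp (-(2 * (ε * S) ^ 2 / V)))
          + ENNReal.ofReal (Real.exp (-(2 * (ε * S) ^ 2 / V))) := add_le_add hAen hBen
    _ = ENNReal.ofReal (Real.exp (-(2 * (ε * S) ^ 2 / V))
          + Real.exp (-(2 * (ε * S) ^ 2 / V))) :=
        (ENNReal.ofReal_add (Real.exp_pos _).le (Real.exp_pos _).le).symm
    _ ≤ ENNReal.ofReal α := ENNReal.ofReal_le_ofReal hkey
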